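/- Let X be a set, C a concept class on X, and H a hypothesis class with C ⊆ H ⊆ P(X). Suppose Ldim(C) < ∞. Then C(C, H) < ∞ if and only if SC(C, H) < ∞. -/

import Mathlib

/-!
Definitions for query learning: concepts are total functions `X → Bool`,
partially specified subsets are functions `X → Option Bool`.
-/

/-- A total concept `f` extends the partially specified subset `A`
(i.e. agrees with `A` on its domain). -/
def PExtends {X : Type*} (f : X → Bool) (A : X → Option Bool) : Prop :=
  ∀ x b, A x = some b → f x = b

/-- `A` is `n`-consistent with `C`: every restriction of `A` of size at most `n`
has an extension in `C`. -/
def NConsistent {X : Type*} (C : Set (X → Bool)) (A : X → Option Bool) (n : ℕ) : Prop :=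
  ∀ s : Finset X, s.card ≤ n → ∃ f ∈ C, ∀ x ∈ s, ∀ b, A x = some b → f x = b

/-- `A` is finitely consistent with `C`: every finite restriction of `A`
has an extension in `C`. -/
def FinitelyConsistent {X : Type*} (C : Set (X → Bool)) (A : X → Option Bool) : Prop :=
  ∀ s : Finset X, ∃ f ∈ C, ∀ x ∈ s, ∀ b, A x = some b → f x = b

/-- There is a complete binary tree of height `d`, with internal nodes labelled by
elements of `X` (here indexed by the binary path leading to the node), whose leaves
can each be properly labelled by a concept of `C` agreeing with the root-to-leaf path. -/
def LdimGe {X : Type*} (C : Set (X → Bool)) (d : ℕ) : Prop :=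
  ∃ t : List Bool → X, ∀ σ : List Bool, σ.length = d →
    ∃ f ∈ C, ∀ k, k < d → f (t (σ.take k)) = σ.getD k false

/-- The Littlestone dimension of `C`, valued in `ℕ∞` (`⊤` = no maximum exists). -/
noncomputable def Ldim {X : Type*} (C : Set (X → Bool)) : ℕ∞ :=
  sSup {n : ℕ∞ | ∃ d : ℕ, n = d ∧ LdimGe C d}

/-- `xs` is a valid sequence of counterexamples that an adversarial teacher with
target concept `A` can return against the learner strategy `s` (the learner's next
hypothesis is a function of the list of counterexamples received so far). -/
def ValidEQPlay {X : Type*} (A : X → Bool) (s : List X → (X → Bool)) (xs : List X) : Prop :=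
  ∀ (i : ℕ) (h : i < xs.length),
    s (xs.take i) (xs.get ⟨i, h⟩) ≠ A (xs.get ⟨i, h⟩)

/-- Some learner strategy with hypotheses from `H` identifies every concept of `C`
in at most `n` equivalence queries, against every teacher. -/
def EQLearnIn {X : Type*} (C H : Set (X → Bool)) (n : ℕ) : Prop :=
  ∃ s : List X → (X → Bool), (∀ l, s l ∈ H) ∧
    ∀ A ∈ C, ∀ xs : List X, ValidEQPlay A s xs → xs.length < n

/-- The equivalence-query learning complexity `LC^EQ(C, H)`, valued in `ℕ∞`. -/
noncomputable def LCEQ {X : Type*} (C H : Set (X → Bool)) : ℕ∞ :=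
  sInf {n : ℕ∞ | ∃ m : ℕ, n = m ∧ EQLearnIn C H m}

/-- `xs` is a valid play of a teacher with target `A` against the EQ+MQ learner
strategy `s`: the history records pairs `(x, A x)`; at each step, if the learner
makes the membership query `x` the teacher answers `(x, A x)`, and if the learner
makes an equivalence query `B` the teacher returns a counterexample to `B`. -/
def ValidEMPlay {X : Type*} (A : X → Bool) (s : List (X × Bool) → X ⊕ (X → Bool))
    (xs : List (X × Bool)) : Prop :=
  ∀ (i : ℕ) (h : i < xs.length),
    (xs.get ⟨i, h⟩).2 = A (xs.get ⟨i, h⟩).1 ∧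
    (∀ x, s (xs.take i) = Sum.inl x → (xs.get ⟨i, h⟩).1 = x) ∧
    (∀ B, s (xs.take i) = Sum.inr B → B (xs.get ⟨i, h⟩).1 ≠ A (xs.get ⟨i, h⟩).1)

/-- Some learner strategy making membership queries on elements of `X` and
equivalence queries from `H` identifies every concept of `C` in at most `n`
queries in total, against every teacher. -/
def EMLearnIn {X : Type*} (C H : Set (X → Bool)) (n : ℕ) : Prop :=
  ∃ s : List (X × Bool) → X ⊕ (X → Bool),
    (∀ l B, s l = Sum.inr B → B ∈ H) ∧
    ∀ A ∈ C, ∀ xs : List (X × Bool), ValidEMPlay A s xs → xs.length < n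

/-- The EQ+MQ learning complexity `LC^{EQ+MQ}(C, H)`, valued in `ℕ∞`. -/
noncomputable def LCEM {X : Type*} (C H : Set (X → Bool)) : ℕ∞ :=
  sInf {n : ℕ∞ | ∃ m : ℕ, n = m ∧ EMLearnIn C H m}

/-- Every total function `X → Bool` that is `n`-consistent with `C` belongs to `H`. -/
def CDimLe {X : Type*} (C H : Set (X → Bool)) (n : ℕ) : Prop :=
  ∀ A : X → Bool, NConsistent C (fun x => some (A x)) n → A ∈ H

/-- The consistency dimension `C(C, H)`, valued in `ℕ∞`. -/
noncomputable def CDim {X : Type*} (C H : Set (X → Bool)) : ℕ∞ :=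
  sInf {n : ℕ∞ | ∃ m : ℕ, n = m ∧ CDimLe C H m}

/-- Every partially specified subset that is `n`-consistent with `C` has a total
extension in `H`. -/
def SCDimLe {X : Type*} (C H : Set (X → Bool)) (n : ℕ) : Prop :=
  ∀ A : X → Option Bool, NConsistent C A n → ∃ B ∈ H, PExtends B A

/-- The strong consistency dimension `SC(C, H)`, valued in `ℕ∞`. -/
noncomputable def SCDim {X : Type*} (C H : Set (X → Bool)) : ℕ∞ :=
  sInf {n : ℕ∞ | ∃ m : ℕ, n = m ∧ SCDimLe C H m}

section Aux

variable {X : Type*}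

lemma ncons_mono {C : Set (X → Bool)} {A : X → Option Bool} {n n' : ℕ} (h : n' ≤ n)
    (hA : NConsistent C A n) : NConsistent C A n' :=
  fun s hs => hA s (hs.trans h)

/-- The version space: concepts of `C` that agree with `A` on `p`. -/
def Vs (C : Set (X → Bool)) (A : X → Option Bool) (p : Finset X) : Set (X → Bool) :=
  {f | f ∈ C ∧ ∀ y ∈ p, ∀ b, A y = some b → f y = b}

lemma ldimGe_mono {V W : Set (X → Bool)} (h : V ⊆ W) {d : ℕ} (hV : LdimGe V d) :
    LdimGe W d := by
  obtain ⟨t, ht⟩ := hV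
  exact ⟨t, fun σ hσ => by
    obtain ⟨f, hf, hfk⟩ := ht σ hσ
    exact ⟨f, h hf, hfk⟩⟩

lemma ldimGe_zero [Nonempty X] {V : Set (X → Bool)} (h : V.Nonempty) : LdimGe V 0 := by
  obtain ⟨f, hf⟩ := h
  exact ⟨fun _ => Classical.arbitrary X,
    fun σ _ => ⟨f, hf, fun k hk => absurd hk (by omega)⟩⟩

lemma ldimGe_branch {V : Set (X → Bool)} {x : X} {r : ℕ}
    (h0 : LdimGe {f | f ∈ V ∧ f x = false} r)
    (h1 : LdimGe {f | f ∈ V ∧ f x = true} r) : LdimGe V (r + 1) := by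
  obtain ⟨t0, ht0⟩ := h0
  obtain ⟨t1, ht1⟩ := h1
  refine ⟨fun σ => match σ with
    | [] => x
    | (false :: τ) => t0 τ
    | (true :: τ) => t1 τ, ?_⟩
  intro σ hσ
  cases σ with
  | nil => simp at hσ
  | cons b τ =>
    have hτ : τ.length = r := by simpa using hσ
    cases b with
    | false =>
      obtain ⟨f, ⟨hfV, hfx⟩, hf⟩ := ht0 τ hτ
      refine ⟨f, hfV, ?_⟩
      intro k hk
      cases k with
      | zero => simpa using hfx
      | succ k => simpa using hf k (by omega)
    | true =>
      obtain ⟨f, ⟨hfV, hfx⟩, hf⟩ := ht1 τ hτ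
      refine ⟨f, hfV, ?_⟩
      intro k hk
      cases k with
      | zero => simpa using hfx
      | succ k => simpa using hf k (by omega)

lemma fill_one {C : Set (X → Bool)} {A : X → Option Bool} {M : ℕ}
    (h : NConsistent C A (2 * M + 1)) (x : X) :
    ∃ A' : X → Option Bool, (∀ y b, A y = some b → A' y = some b) ∧ A' x ≠ none ∧
      NConsistent C A' M := by
  classical
  cases hx : A x with
  | some b =>
    exact ⟨A, fun _ _ hy => hy, by simp [hx], ncons_mono (by omega) h⟩
  | none =>
    have key : ∃ b : Bool, NConsistent C (fun y => if y = x then some b else A y) M := by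
      by_contra hb
      push_neg at hb
      have h0 := hb false
      have h1 := hb true
      unfold NConsistent at h0 h1
      push_neg at h0 h1
      obtain ⟨s0, hs0c, hs0⟩ := h0
      obtain ⟨s1, hs1c, hs1⟩ := h1
      obtain ⟨f, hfC, hf⟩ := h (s0 ∪ s1 ∪ {x}) (by
        have hu1 := Finset.card_union_le (s0 ∪ s1) ({x} : Finset X)
        have hu2 := Finset.card_union_le s0 s1
        simp only [Finset.card_singleton] at hu1
        omega)
      have hgen : ∀ (b : Bool) (s : Finset X), s ⊆ s0 ∪ s1 ∪ {x} →
          (∀ g ∈ C, ∃ y ∈ s, ∃ bv, (if y = x then some b else A y) = some bv ∧ g y ≠ bv) →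
          f x ≠ b := by
        intro b s hsub hs hfx
        obtain ⟨y, hys, bv, hbv, hne⟩ := hs f hfC
        by_cases hyx : y = x
        · subst hyx
          rw [if_pos rfl] at hbv
          exact hne (by rw [hfx, Option.some_injective _ hbv])
        · rw [if_neg hyx] at hbv
          exact hne (hf y (hsub hys) bv hbv)
      have hx0 : f x ≠ false := hgen false s0
        (fun y hy => Finset.mem_union_left _ (Finset.mem_union_left _ hy)) hs0
      have hx1 : f x ≠ true := hgen true s1
        (fun y hy => Finset.mem_union_left _ (Finset.mem_union_right _ hy)) hs1
      cases hfx : f x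
      · exact hx0 hfx
      · exact hx1 hfx
    obtain ⟨b, hb⟩ := key
    refine ⟨fun y => if y = x then some b else A y, ?_, by simp, hb⟩
    intro y b' hy
    have hyx : y ≠ x := by
      rintro rfl
      rw [hx] at hy
      cases hy
    simp only [if_neg hyx]
    exact hy

lemma fill_finset {C : Set (X → Bool)} (s : Finset X) :
    ∀ (A : X → Option Bool) (M : ℕ), NConsistent C A (2 ^ s.card * (M + 1) - 1) →
    ∃ A', (∀ y b, A y = some b → A' y = some b) ∧ (∀ y ∈ s, A' y ≠ none) ∧
      NConsistent C A' M := by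
  classical
  induction s using Finset.induction_on with
  | empty =>
    intro A M h
    exact ⟨A, fun _ _ hy => hy, by simp, ncons_mono (by simp) h⟩
  | @insert x s hxs ih =>
    intro A M h
    have hcard : (insert x s).card = s.card + 1 := Finset.card_insert_of_notMem hxs
    have hP : 0 < 2 ^ s.card * (M + 1) := by positivity
    have heq : 2 ^ (insert x s).card * (M + 1) = 2 * (2 ^ s.card * (M + 1)) := by
      rw [hcard, pow_succ]; ring
    have h2 : 2 * (2 ^ s.card * (M + 1) - 1) + 1 ≤ 2 ^ (insert x s).card * (M + 1) - 1 := by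
      rw [heq]; omega
    obtain ⟨A1, hA1ext, hA1x, hA1⟩ := fill_one (ncons_mono h2 h) x
    obtain ⟨A2, hA2ext, hA2s, hA2⟩ := ih A1 M hA1
    refine ⟨A2, fun y b hy => hA2ext y b (hA1ext y b hy), ?_, hA2⟩
    intro y hy
    rcases Finset.mem_insert.mp hy with rfl | hy
    · obtain ⟨b, hb⟩ := Option.ne_none_iff_exists'.mp hA1x
      rw [hA2ext y b hb]
      simp
    · exact hA2s y hy

lemma main_lemma [Nonempty X] {C H : Set (X → Bool)} {c : ℕ} (hc : CDimLe C H c) :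
    ∀ r m : ℕ, ∃ N : ℕ, ∀ (A A' : X → Option Bool) (p : Finset X),
      (∀ B ∈ H, ¬ PExtends B A) →
      p.card ≤ m →
      (∀ y b, A y = some b → A' y = some b) →
      (∀ y ∈ p, A' y ≠ none) →
      NConsistent C A' N →
      ¬ LdimGe (Vs C A' p) r → False := by
  intro r
  induction r with
  | zero =>
    intro m
    refine ⟨m, fun A A' p hno hp hext hdom hcons hL => ?_⟩
    obtain ⟨f, hfC, hf⟩ := hcons p hp
    exact hL (ldimGe_zero ⟨f, hfC, hf⟩)
  | succ r ih =>
    intro m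
    obtain ⟨N', hN'⟩ := ih (m + 1)
    classical
    refine ⟨2 ^ c * (max N' (c + m) + 2), fun A A' p hno hp hext hdom hcons hL => ?_⟩
    set M := max N' (c + m) with hM
    have h2c : 0 < 2 ^ c := pow_pos (by norm_num) c
    have hN'le : N' ≤ 2 ^ c * (M + 2) := by
      calc N' ≤ M + 2 := by omega
        _ ≤ 2 ^ c * (M + 2) := Nat.le_mul_of_pos_left _ h2c
    obtain ⟨hyp, hsoa⟩ :
        ∃ hyp : X → Bool, ∀ x, ¬ LdimGe {f | f ∈ Vs C A' p ∧ f x = !(hyp x)} r := by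
      refine ⟨fun x => if LdimGe {f | f ∈ Vs C A' p ∧ f x = true} r then true else false, ?_⟩
      intro x hbad
      by_cases hx : LdimGe {f | f ∈ Vs C A' p ∧ f x = true} r
      · simp only [if_pos hx, Bool.not_true] at hbad
        exact hL (ldimGe_branch hbad hx)
      · simp only [if_neg hx, Bool.not_false] at hbad
        exact hx hbad
    by_cases hH : hyp ∈ H
    · -- the SOA hypothesis is in H, so it disagrees with A somewhere
      have hne := hno hyp hH
      unfold PExtends at hne
      push_neg at hne
      obtain ⟨x, b0, hAx, hhx⟩ := hne
      have hA'x : A' x = some b0 := hext x b0 hAx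
      refine hN' A A' (insert x p) hno ?_ hext ?_ (ncons_mono hN'le hcons) ?_
      · exact (Finset.card_insert_le _ _).trans (by omega)
      · intro y hy
        rcases Finset.mem_insert.mp hy with rfl | hy
        · simp [hA'x]
        · exact hdom y hy
      · intro hL'
        refine hsoa x (ldimGe_mono ?_ hL')
        rintro f ⟨hfC, hfp⟩
        refine ⟨⟨hfC, fun y hy b hb => hfp y (Finset.mem_insert_of_mem hy) b hb⟩, ?_⟩
        have hfx : f x = b0 := hfp x (Finset.mem_insert_self x p) b0 hA'x
        rw [hfx]
        exact Bool.eq_not_iff.mpr (Ne.symm hhx)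
    · -- the SOA hypothesis is not in H: it is not c-consistent
      have hnc : ¬ NConsistent C (fun x => some (hyp x)) c := fun hcc => hH (hc hyp hcc)
      unfold NConsistent at hnc
      push_neg at hnc
      obtain ⟨s, hsc, hs⟩ := hnc
      have hle : 2 ^ s.card * (M + 1) - 1 ≤ 2 ^ c * (M + 2) := by
        have hpow : 2 ^ s.card ≤ 2 ^ c := Nat.pow_le_pow_right (by norm_num) hsc
        have := Nat.mul_le_mul hpow (show M + 1 ≤ M + 2 by omega)
        omega
      obtain ⟨A'', hext2, hdom2, hcons2⟩ := fill_finset s A' M (ncons_mono hle hcons)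
      obtain ⟨f, hfC, hf⟩ := hcons2 (s ∪ p) (by
        have := Finset.card_union_le s p
        have hMge : c + m ≤ M := le_max_right _ _
        omega)
      obtain ⟨x, hxs, b1, hb1, hfx⟩ := hs f hfC
      have hb1' : b1 = hyp x := (Option.some_injective _ hb1).symm
      rw [hb1'] at hfx
      have hA''x : A'' x = some (f x) := by
        rcases hx2 : A'' x with _ | b2
        · exact absurd hx2 (hdom2 x hxs)
        · rw [hf x (Finset.mem_union_left _ hxs) b2 hx2]
      refine hN' A A'' (insert x p) hno ?_ (fun y b hy => hext2 y b (hext y b hy)) ?_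
        (ncons_mono (le_max_left _ _) hcons2) ?_
      · exact (Finset.card_insert_le _ _).trans (by omega)
      · intro y hy
        rcases Finset.mem_insert.mp hy with rfl | hy
        · simp [hA''x]
        · rcases hAy : A' y with _ | b
          · exact absurd hAy (hdom y hy)
          · rw [hext2 y b hAy]; simp
      · intro hL'
        refine hsoa x (ldimGe_mono ?_ hL')
        rintro g ⟨hgC, hgp⟩
        refine ⟨⟨hgC, fun y hy b hb =>
          hgp y (Finset.mem_insert_of_mem hy) b (hext2 y b hb)⟩, ?_⟩
        have hgx : g x = f x := hgp x (Finset.mem_insert_self x p) (f x) hA''x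
        rw [hgx]
        exact Bool.eq_not_iff.mpr hfx

end Aux

theorem stmt_11 {X : Type*} (C H : Set (X → Bool)) (hCH : C ⊆ H) (h : Ldim C < ⊤) :
    CDim C H < ⊤ ↔ SCDim C H < ⊤ := by
  constructor
  · intro hC
    -- extract a finite consistency dimension bound
    have hCne : {n : ℕ∞ | ∃ m : ℕ, n = m ∧ CDimLe C H m}.Nonempty := by
      by_contra hemp
      rw [Set.not_nonempty_iff_eq_empty] at hemp
      rw [CDim, hemp, sInf_empty] at hC
      exact lt_irrefl _ hC
    obtain ⟨n, c, rfl, hc⟩ := hCne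
    -- extract a finite Littlestone dimension bound
    obtain ⟨D, hD⟩ : ∃ D : ℕ, ¬ LdimGe C (D + 1) := by
      obtain ⟨D, hD⟩ := WithTop.ne_top_iff_exists.mp h.ne
      refine ⟨D, fun hge => ?_⟩
      have hle : ((D + 1 : ℕ) : ℕ∞) ≤ Ldim C := le_sSup ⟨D + 1, rfl, hge⟩
      rw [← hD] at hle
      have hle2 : ((D + 1 : ℕ) : ℕ∞) ≤ ((D : ℕ) : ℕ∞) := hle
      have : D + 1 ≤ D := by exact_mod_cast hle2
      omega
    cases isEmpty_or_nonempty X with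
    | inl hX =>
      have hsc : SCDimLe C H 0 := by
        intro A hA
        obtain ⟨f, hfC, -⟩ := hA ∅ (by simp)
        exact ⟨f, hCH hfC, fun x => isEmptyElim x⟩
      exact lt_of_le_of_lt (sInf_le ⟨0, rfl, hsc⟩) (WithTop.coe_lt_top 0)
    | inr hX =>
      obtain ⟨N, hN⟩ := main_lemma (H := H) hc (D + 1) 0
      have hsc : SCDimLe C H N := by
        intro A hA
        by_contra hno
        push_neg at hno
        refine hN A A ∅ hno (by simp) (fun y b hy => hy) (by simp) hA ?_
        exact fun hge => hD (ldimGe_mono (fun f hf => hf.1) hge)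
      exact lt_of_le_of_lt (sInf_le ⟨N, rfl, hsc⟩) (WithTop.coe_lt_top N)
  · intro hSC
    have hSCne : {n : ℕ∞ | ∃ m : ℕ, n = m ∧ SCDimLe C H m}.Nonempty := by
      by_contra hemp
      rw [Set.not_nonempty_iff_eq_empty] at hemp
      rw [SCDim, hemp, sInf_empty] at hSC
      exact lt_irrefl _ hSC
    obtain ⟨n, m, rfl, hm⟩ := hSCne
    have hcd : CDimLe C H m := by
      intro A hA
      obtain ⟨B, hBH, hBext⟩ := hm (fun x => some (A x)) hA
      have hBA : B = A := funext fun x => hBext x (A x) rfl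
      rwa [← hBA]
    exact lt_of_le_of_lt (sInf_le ⟨m, rfl, hcd⟩) (WithTop.coe_lt_top m)
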